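/- Suppose c : G × V → ℝ satisfies: for every p, the map g ↦ c(g,p) + K‖ξ₁(g)‖² is H-convex on a ball B. If ψ : Ω → (-∞,+∞] is proper and c-H-convex, then ψ(g) + K‖ξ₁(g)‖² is H-convex on B, i.e. ψ is K-H-semiconvex on B. -/

import Mathlib

noncomputable def hmul (g g' : ℝ × ℝ × ℝ) : ℝ × ℝ × ℝ :=
  (g.1 + g'.1, g.2.1 + g'.2.1, g.2.2 + g'.2.2 + (g.1 * g'.2.1 - g'.1 * g.2.1) / 2)

noncomputable def hinv (g : ℝ × ℝ × ℝ) : ℝ × ℝ × ℝ := (-g.1, -g.2.1, -g.2.2)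

noncomputable def dil (l : ℝ) (g : ℝ × ℝ × ℝ) : ℝ × ℝ × ℝ :=
  (l * g.1, l * g.2.1, l ^ 2 * g.2.2)

/-- The horizontal plane through `g`. -/
def HP (g : ℝ × ℝ × ℝ) : Set (ℝ × ℝ × ℝ) :=
  {g' | g'.2.2 = g.2.2 + (g.1 * g'.2.1 - g'.1 * g.2.1) / 2}

/-- Projection on the first layer. -/
noncomputable def xi1 (g : ℝ × ℝ × ℝ) : ℝ × ℝ := (g.1, g.2.1)

/-- The twisted convex combination `σ_{g,g'}(λ) = g · δ_λ(g⁻¹ g')`. -/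
noncomputable def tcc (g g' : ℝ × ℝ × ℝ) (l : ℝ) : ℝ × ℝ × ℝ :=
  hmul g (dil l (hmul (hinv g) g'))

/-- Squared Euclidean norm on the first layer. -/
noncomputable def sqnorm (p : ℝ × ℝ) : ℝ := p.1 ^ 2 + p.2 ^ 2


private lemma ereal_scale {l : ℝ} (hl : 0 ≤ l) {A : ℝ} {Y : EReal}
    (h : (A : EReal) ≤ Y) : ((l * A : ℝ) : EReal) ≤ ((l : ℝ) : EReal) * Y := by
  rcases eq_or_lt_of_le hl with h0 | h0
  · simp [← h0]
  · rw [EReal.coe_mul]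
    exact mul_le_mul_of_nonneg_left h (by exact_mod_cast hl)

/-- If for every `p` the map `g ↦ c g p + K‖ξ₁ g‖²` is H-convex on a ball `B`
and `ψ` is proper and `c` H-convex on `Ω`, then `g ↦ ψ g + K‖ξ₁ g‖²` is
H-convex on `B`, i.e. `ψ` is `K` H-semiconvex on `B`. -/
theorem cHconvex_implies_Hsemiconvex
    (c : ℝ × ℝ × ℝ → ℝ × ℝ → ℝ) (K : ℝ) (Ω B : Set (ℝ × ℝ × ℝ)) (hBΩ : B ⊆ Ω)
    (hBconv : ∀ g ∈ B, ∀ g' ∈ HP g ∩ B, ∀ l ∈ Set.Icc (0 : ℝ) 1, tcc g g' l ∈ B)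
    (hc : ∀ p : ℝ × ℝ, ∀ g ∈ B, ∀ g' ∈ HP g ∩ B, ∀ l ∈ Set.Icc (0 : ℝ) 1,
      c (tcc g g' l) p + K * sqnorm (xi1 (tcc g g' l)) ≤
        (1 - l) * (c g p + K * sqnorm (xi1 g)) + l * (c g' p + K * sqnorm (xi1 g')))
    (ψ : ℝ × ℝ × ℝ → EReal)
    (hproper : (∀ g, ψ g ≠ ⊥) ∧ ∃ g ∈ Ω, ψ g ≠ ⊤)
    (hψ : ∀ g ∈ Ω,
      (∃ v : ℝ × ℝ, ∃ α : ℝ, ∀ g' ∈ HP g ∩ Ω, ((c g' v + α : ℝ) : EReal) ≤ ψ g') ∧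
      ψ g = sSup {x : EReal | ∃ v : ℝ × ℝ, ∃ α : ℝ,
        (∀ g' ∈ HP g ∩ Ω, ((c g' v + α : ℝ) : EReal) ≤ ψ g') ∧
        x = ((c g v + α : ℝ) : EReal)}) :
    ∀ g ∈ B, ∀ g' ∈ HP g ∩ B, ∀ l ∈ Set.Icc (0 : ℝ) 1,
      ψ (tcc g g' l) + ((K * sqnorm (xi1 (tcc g g' l)) : ℝ) : EReal) ≤
        ((1 - l : ℝ) : EReal) * (ψ g + ((K * sqnorm (xi1 g) : ℝ) : EReal)) +
          ((l : ℝ) : EReal) * (ψ g' + ((K * sqnorm (xi1 g') : ℝ) : EReal)) := by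
  intro g hg g' hg'mem l hl
  obtain ⟨hg'HP, hg'B⟩ := hg'mem
  set σ := tcc g g' l with hσdef
  have hσB : σ ∈ B := hBconv g hg g' ⟨hg'HP, hg'B⟩ l hl
  have hσΩ : σ ∈ Ω := hBΩ hσB
  have hgΩ : g ∈ Ω := hBΩ hg
  have hg'Ω : g' ∈ Ω := hBΩ hg'B
  have hg'eq : g'.2.2 = g.2.2 + (g.1 * g'.2.1 - g'.1 * g.2.1) / 2 := hg'HP
  have hgHP : g ∈ HP σ := by
    show g.2.2 = σ.2.2 + (σ.1 * g.2.1 - g.1 * σ.2.1) / 2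
    simp only [hσdef, tcc, hmul, hinv, dil]
    rw [hg'eq]; ring
  have hg'HPσ : g' ∈ HP σ := by
    show g'.2.2 = σ.2.2 + (σ.1 * g'.2.1 - g'.1 * σ.2.1) / 2
    simp only [hσdef, tcc, hmul, hinv, dil]
    rw [hg'eq]; ring
  obtain ⟨hl0, hl1⟩ := hl
  obtain ⟨_, hrep⟩ := hψ σ hσΩ
  set r : EReal := ((K * sqnorm (xi1 σ) : ℝ) : EReal) with hr
  set T : EReal := ((1 - l : ℝ) : EReal) * (ψ g + ((K * sqnorm (xi1 g) : ℝ) : EReal)) +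
      ((l : ℝ) : EReal) * (ψ g' + ((K * sqnorm (xi1 g') : ℝ) : EReal)) with hT
  set S : Set EReal := {x : EReal | ∃ v : ℝ × ℝ, ∃ α : ℝ,
      (∀ g'' ∈ HP σ ∩ Ω, ((c g'' v + α : ℝ) : EReal) ≤ ψ g'') ∧
      x = ((c σ v + α : ℝ) : EReal)} with hS
  have key : ∀ x ∈ S, x + r ≤ T := by
    rintro x ⟨v, α, hsupp, rfl⟩
    have h1 : ((c g v + α : ℝ) : EReal) ≤ ψ g := hsupp g ⟨hgHP, hgΩ⟩
    have h2 : ((c g' v + α : ℝ) : EReal) ≤ ψ g' := hsupp g' ⟨hg'HPσ, hg'Ω⟩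
    have hcr := hc v g hg g' ⟨hg'HP, hg'B⟩ l ⟨hl0, hl1⟩
    have hreal : c σ v + α + K * sqnorm (xi1 σ) ≤
        (1 - l) * (c g v + α + K * sqnorm (xi1 g)) +
        l * (c g' v + α + K * sqnorm (xi1 g')) := by
      have : (1 - l) * (c g v + α + K * sqnorm (xi1 g)) +
          l * (c g' v + α + K * sqnorm (xi1 g')) =
          (1 - l) * (c g v + K * sqnorm (xi1 g)) +
          l * (c g' v + K * sqnorm (xi1 g')) + α := by ring
      rw [this]
      linarith [hcr]
    calc ((c σ v + α : ℝ) : EReal) + r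
        = ((c σ v + α + K * sqnorm (xi1 σ) : ℝ) : EReal) := by
          rw [hr, ← EReal.coe_add]
      _ ≤ (((1 - l) * (c g v + α + K * sqnorm (xi1 g)) +
            l * (c g' v + α + K * sqnorm (xi1 g')) : ℝ) : EReal) :=
          EReal.coe_le_coe_iff.mpr hreal
      _ ≤ T := by
          rw [EReal.coe_add, hT]
          refine add_le_add ?_ ?_
          · refine ereal_scale (by linarith) ?_
            rw [EReal.coe_add]
            exact add_le_add_left h1 _
          · refine ereal_scale hl0 ?_
            rw [EReal.coe_add]
            exact add_le_add_left h2 _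
  -- now conclude: ψ σ = sSup S
  have hsup : sSup S ≤ T + ((-(K * sqnorm (xi1 σ)) : ℝ) : EReal) := by
    refine sSup_le fun x hx => ?_
    have hxr := key x hx
    have : x = (x + r) + ((-(K * sqnorm (xi1 σ)) : ℝ) : EReal) := by
      rw [add_assoc, hr, ← EReal.coe_add]
      norm_num
    rw [this]
    exact add_le_add_left hxr _
  calc ψ σ + r = sSup S + r := by rw [hrep]
    _ ≤ (T + ((-(K * sqnorm (xi1 σ)) : ℝ) : EReal)) + r := add_le_add_left hsup _
    _ = T := by
        rw [add_assoc, hr, ← EReal.coe_add]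
        norm_num
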